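/- arXiv:1107.3343 — 4 statements merged into one kernel-verified Lean document; each statement's English description precedes it below -/
import Mathlib

section
/- For a 2-form B on a smooth manifold M, the bundle automorphism τ_B(X,α) = (X, α + i_X B) of TM ⊕ T*M preserves the Courant bracket ⟦(X,α),(Y,β)⟧ = ([X,Y], L_X β − i_Y dα) if and only if dB = 0. -/
/-!
Algebraic model of a smooth manifold `M`: `R` is its commutative `ℝ`-algebra of
smooth functions `C^∞(M)`, vector fields are derivations of `R` (with the usual
Lie bracket of vector fields given by the commutator), `1`-forms are `R`-linear
functionals on vector fields, and `2`-forms are skew-symmetric `R`-bilinear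
forms on vector fields.  Exterior derivatives, Lie derivatives and interior
products are given by the usual Cartan formulas.
-/

variable {R : Type*} [CommRing R] [Algebra ℝ R]

/-- Vector fields on `M`. -/
abbrev Vec (R : Type*) [CommRing R] [Algebra ℝ R] := Derivation ℝ R R

/-- `1`-forms on `M`. -/
abbrev Form1 (R : Type*) [CommRing R] [Algebra ℝ R] := Vec R →ₗ[R] R

/-- The Courant bracket `⟦(X,α),(Y,β)⟧ = ([X,Y], L_X β − i_Y dα)` on sections of
`𝕋M = TM ⊕ T*M`, written out pointwise via the Cartan formulas
`(L_X β)(Z) = X(β(Z)) − β([X,Z])` and `dα(Y,Z) = Y(α(Z)) − Z(α(Y)) − α([Y,Z])`. -/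
def Cour (p q : Vec R × (Vec R → R)) : Vec R × (Vec R → R) :=
  (⁅p.1, q.1⁆,
    fun Z => p.1 (q.2 Z) - q.2 ⁅p.1, Z⁆ -
      (q.1 (p.2 Z) - Z (p.2 q.1) - p.2 ⁅q.1, Z⁆))

/-- The exterior derivative of a `2`-form `B` (given via `B^♯ : X ↦ B(X,·)`),
evaluated on vector fields `X, Y, Z` by the Cartan formula. -/
def dCartan (B : Vec R →ₗ[R] Form1 R) (X Y Z : Vec R) : R :=
  X (B Y Z) - Y (B X Z) + Z (B X Y) -
    B ⁅X, Y⁆ Z + B ⁅X, Z⁆ Y - B ⁅Y, Z⁆ X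

/-- The `B`-field transformation `τ_B(X,α) = (X, α + i_X B)`. -/
def tauBv (B : Vec R →ₗ[R] Form1 R) (p : Vec R × (Vec R → R)) :
    Vec R × (Vec R → R) :=
  (p.1, fun Z => p.2 Z + B p.1 Z)

/-- For a `2`-form `B` on `M`, the bundle automorphism `τ_B(X,α) = (X, α + i_X B)`
of `TM ⊕ T*M` preserves the Courant bracket
`⟦(X,α),(Y,β)⟧ = ([X,Y], L_X β − i_Y dα)` if and only if `dB = 0`. -/
theorem tauB_preserves_courant_iff_closed
    (B : Vec R →ₗ[R] Form1 R) (hB : ∀ X Y : Vec R, B X Y = - B Y X) :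
    (∀ (X Y : Vec R) (α β : Form1 R),
        tauBv B (Cour (X, fun Z => α Z) (Y, fun Z => β Z)) =
          Cour (tauBv B (X, fun Z => α Z)) (tauBv B (Y, fun Z => β Z))) ↔
      (∀ X Y Z : Vec R, dCartan B X Y Z = 0) := by
  constructor
  · intro h X Y Z
    have := congrArg (fun p => p.2 Z) (h X Y 0 0)
    simp only [Cour, tauBv, dCartan] at this ⊢
    simp at this
    linear_combination -this + hB ⁅X,Z⁆ Y - hB ⁅Y,Z⁆ X
  · intro h X Y α β
    have key := h X Y
    simp only [dCartan] at key
    simp only [Cour, tauBv]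
    refine Prod.ext rfl ?_
    funext Z
    simp only [map_add]
    linear_combination -key Z + hB ⁅X,Z⁆ Y - hB ⁅Y,Z⁆ X
end

section
/- For vector fields X, Y on M, 1-forms α, β, and a closed 2-form B on M, one has ⟦(X, α + i_X B),(Y, β + i_Y B)⟧ = ([X,Y], L_X β − i_Y dα + i_{[X,Y]} B). In other words, τ_B applied to the Courant bracket of (X,α) and (Y,β) equals the Courant bracket of τ_B(X,α) and τ_B(Y,β). -/
/-!
Algebraic model of a smooth manifold `M`: `R` is its commutative `ℝ`-algebra of
smooth functions `C^∞(M)`, vector fields are derivations of `R` (with the usual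
Lie bracket of vector fields given by the commutator), `1`-forms are `R`-linear
functionals on vector fields, and `2`-forms are skew-symmetric `R`-bilinear
forms on vector fields.  Exterior derivatives, Lie derivatives and interior
products are given by the usual Cartan formulas.
-/

variable {R : Type*} [CommRing R] [Algebra ℝ R]

/-- For vector fields `X, Y`, `1`-forms `α, β` and a closed `2`-form `B` on `M`,
`⟦(X, α + i_X B),(Y, β + i_Y B)⟧ = ([X,Y], L_X β − i_Y dα + i_{[X,Y]} B)`;
in other words, `τ_B` applied to the Courant bracket of `(X,α)` and `(Y,β)`
equals the Courant bracket of `τ_B(X,α)` and `τ_B(Y,β)`. -/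
theorem courant_of_Bfield_images
    (B : Vec R →ₗ[R] Form1 R) (hB : ∀ X Y : Vec R, B X Y = - B Y X)
    (hdB : ∀ X Y Z : Vec R, dCartan B X Y Z = 0)
    (X Y : Vec R) (α β : Form1 R) :
    Cour (tauBv B (X, fun Z => α Z)) (tauBv B (Y, fun Z => β Z)) =
      tauBv B (Cour (X, fun Z => α Z) (Y, fun Z => β Z)) := by
  have key := hdB
  refine Prod.ext rfl ?_
  funext Z
  simp only [Cour, tauBv, map_add]
  have h1 := hdB X Y Z
  have h2 := hB ⁅X, Z⁆ Y
  have h3 := hB ⁅Y, Z⁆ X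
  unfold dCartan at h1
  linear_combination h1 - h2 + h3
end

section
/- Let ω be a 2-form on M. The graph L_ω of ω^♯ : TM → T*M is involutive under the Courant bracket if and only if dω = 0. -/
/-!
Algebraic model of a smooth manifold `M`: `R` is its commutative `ℝ`-algebra of
smooth functions `C^∞(M)`, vector fields are derivations of `R` (with the usual
Lie bracket of vector fields given by the commutator), `1`-forms are `R`-linear
functionals on vector fields, and `2`-forms are skew-symmetric `R`-bilinear
forms on vector fields.  Exterior derivatives, Lie derivatives and interior
products are given by the usual Cartan formulas.
-/

variable {R : Type*} [CommRing R] [Algebra ℝ R]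

/-- Let `ω` be a `2`-form on `M`.  The graph `L_ω = {(X, i_X ω)}` of
`ω^♯ : TM → T*M` is involutive under the Courant bracket (the bracket of any two
sections of `L_ω` is again a section of `L_ω`) if and only if `dω = 0`. -/
theorem graph_form_involutive_iff_closed
    (ω : Vec R →ₗ[R] Form1 R) (hω : ∀ X Y : Vec R, ω X Y = - ω Y X) :
    (∀ X Y : Vec R,
        Cour (X, fun Z => ω X Z) (Y, fun Z => ω Y Z) =
          (⁅X, Y⁆, fun Z => ω ⁅X, Y⁆ Z)) ↔
      (∀ X Y Z : Vec R, dCartan ω X Y Z = 0) := by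
  constructor
  · intro h X Y Z
    have h2 := congrFun (congrArg Prod.snd (h X Y)) Z
    simp only [Cour] at h2
    simp only [dCartan]
    linear_combination h2 + hω Y ⁅X, Z⁆ - hω X ⁅Y, Z⁆
  · intro h X Y
    refine Prod.ext rfl ?_
    funext Z
    have h2 := h X Y Z
    simp only [dCartan] at h2
    simp only [Cour]
    linear_combination h2 - hω Y ⁅X, Z⁆ + hω X ⁅Y, Z⁆
end

section
/- Let π be a bivector field on M. The graph L_π = {(π^♯(α), α)} is involutive under the Courant bracket if and only if [π,π] = 0, where [·,·] is the Schouten bracket; equivalently, if and only if the bracket {f,g} = π(df,dg) satisfies the Jacobi identity. -/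
/-!
Algebraic model of a smooth manifold `M`: `R` is its commutative `ℝ`-algebra of
smooth functions `C^∞(M)`, vector fields are derivations of `R` (with the usual
Lie bracket of vector fields given by the commutator), `1`-forms are `R`-linear
functionals on vector fields, and `2`-forms are skew-symmetric `R`-bilinear
forms on vector fields.  Exterior derivatives, Lie derivatives and interior
products are given by the usual Cartan formulas.
-/

variable {R : Type*} [CommRing R] [Algebra ℝ R]

/-- The differential of a function: `df(X) = X(f)`. -/
def dR (f : R) : Form1 R where
  toFun X := X f
  map_add' X Y := rfl
  map_smul' c X := rfl

lemma lie_smul' (f : R) (X Y : Vec R) : ⁅X, f • Y⁆ = f • ⁅X, Y⁆ + X f • Y := by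
  ext g
  simp [Derivation.commutator_apply, Derivation.leibniz, smul_eq_mul]

/-- The Lie derivative of a `1`-form: `(L_X β)(Y) = X(β(Y)) − β([X,Y])`. -/
def lieD (X : Vec R) (β : Form1 R) : Form1 R where
  toFun Y := X (β Y) - β ⁅X, Y⁆
  map_add' Y Z := by simp; ring
  map_smul' c Y := by
    simp [lie_smul', smul_eq_mul, Derivation.leibniz]
    ring

/-- The bracket `{f,g} = π(df,dg)` of functions induced by a bivector `π`,
where `π^♯(df)` applied to `g` is `π(df,dg)`. -/
def poissonBr (p : Form1 R →ₗ[R] Vec R) (f g : R) : R := p (dR f) g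


@[simp] lemma dR_apply (f : R) (X : Vec R) : dR f X = X f := rfl

@[simp] lemma lieD_apply (X : Vec R) (β : Form1 R) (Y : Vec R) :
    lieD X β Y = X (β Y) - β ⁅X, Y⁆ := rfl

section
variable (p : Form1 R →ₗ[R] Vec R)

lemma pd_apply (hp : ∀ α β : Form1 R, β (p α) = - α (p β)) (α : Form1 R) (f : R) :
    p α f = - α (p (dR f)) := by
  simpa using hp α (dR f)

lemma B_antisym (hp : ∀ α β : Form1 R, β (p α) = - α (p β)) (f g : R) :
    p (dR f) g = - p (dR g) f := by
  simpa using hp (dR f) (dR g)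

variable (hp : ∀ α β : Form1 R, β (p α) = - α (p β))
    (hJ : ∀ f g h : R,
        poissonBr p f (poissonBr p g h) + poissonBr p g (poissonBr p h f) +
          poissonBr p h (poissonBr p f g) = 0)
include hp hJ

lemma ham (f h : R) : ⁅p (dR f), p (dR h)⁆ = p (dR (p (dR f) h)) := by
  ext g
  have j := hJ f g h
  simp only [poissonBr] at j
  rw [Derivation.commutator_apply, B_antisym p hp (p (dR f) h) g,
    B_antisym p hp h g, B_antisym p hp f h, map_neg, map_neg]
  linear_combination -j

lemma Fdf (f h : R) (β : Form1 R) :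
    β ⁅p (dR f), p (dR h)⁆ - dR f ⁅p β, p (dR h)⁆ - p (dR h) (dR f (p β)) = 0 := by
  rw [ham p hp hJ f h, hp (dR (p (dR f) h)) β]
  simp only [dR_apply, Derivation.commutator_apply]
  rw [B_antisym p hp f h, map_neg, pd_apply p hp β f]
  ring

lemma Fdg (g h : R) (α : Form1 R) :
    dR g ⁅p α, p (dR h)⁆ - α ⁅p (dR g), p (dR h)⁆ - p (dR h) (α (p (dR g))) = 0 := by
  have h1 := Fdf p hp hJ g h α
  rw [hp α (dR g), map_neg] at h1
  linear_combination -h1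

lemma liekey (h : R) (α : Form1 R) :
    ⁅p α, p (dR h)⁆ = - p (lieD (p (dR h)) α) := by
  ext g
  have h1 := Fdg p hp hJ g h α
  simp only [dR_apply] at h1
  have h2 : p (lieD (p (dR h)) α) g = - (lieD (p (dR h)) α) (p (dR g)) :=
    pd_apply p hp _ g
  simp only [Derivation.neg_apply, h2, lieD_apply, neg_neg]
  have h3 : ⁅p (dR h), p (dR g)⁆ = - ⁅p (dR g), p (dR h)⁆ := (lie_skew _ _).symm
  rw [h3, map_neg]
  linear_combination h1

lemma Fzero (h : R) (α β : Form1 R) :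
    β ⁅p α, p (dR h)⁆ - α ⁅p β, p (dR h)⁆ - p (dR h) (α (p β)) = 0 := by
  have e1 : β ⁅p α, p (dR h)⁆ = (lieD (p (dR h)) α) (p β) := by
    rw [liekey p hp hJ h α, map_neg, hp (lieD (p (dR h)) α) β, neg_neg]
  have e4 : ⁅p (dR h), p β⁆ = - ⁅p β, p (dR h)⁆ := (lie_skew _ _).symm
  rw [e1, lieD_apply, e4, map_neg]
  ring

end

/-- Let `π` be a bivector field on `M`, encoded by the skew map
`π^♯ : T*M → TM`.  The graph `L_π = {(π^♯α, α)}` is involutive under the Courant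
bracket if and only if the bracket `{f,g} = π(df,dg)` satisfies the Jacobi
identity (equivalently, `[π,π] = 0` for the Schouten bracket, i.e. `π` is a
Poisson bivector). -/
theorem graph_bivector_involutive_iff_jacobi
    (p : Form1 R →ₗ[R] Vec R)
    (hp : ∀ α β : Form1 R, β (p α) = - α (p β)) :
    (∀ α β : Form1 R, ∃ γ : Form1 R,
        Cour (p α, fun Z => α Z) (p β, fun Z => β Z) =
          (p γ, fun Z => γ Z)) ↔
      (∀ f g h : R,
        poissonBr p f (poissonBr p g h) + poissonBr p g (poissonBr p h f) +
          poissonBr p h (poissonBr p f g) = 0) := by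
  constructor
  · intro H f g h
    obtain ⟨γ, hγ⟩ := H (dR f) (dR g)
    have h1 : ⁅p (dR f), p (dR g)⁆ = p γ := congrArg Prod.fst hγ
    have h2 : γ (p (dR h)) = p (dR h) (p (dR f) g) := by
      have h2' := congrFun (congrArg Prod.snd hγ) (p (dR h))
      simp only [Cour, dR_apply, Derivation.commutator_apply] at h2'
      linear_combination -h2'
    have h3 : p γ h = - γ (p (dR h)) := pd_apply p hp γ h
    rw [h2, ← h1, Derivation.commutator_apply, B_antisym p hp f h, map_neg] at h3
    simp only [poissonBr]
    linear_combination h3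
  · intro hJ α β
    refine ⟨lieD (p α) β - lieD (p β) α + dR (α (p β)), ?_⟩
    have hfst : ⁅p α, p β⁆ = p (lieD (p α) β - lieD (p β) α + dR (α (p β))) := by
      ext h
      have hF := Fzero p hp hJ h α β
      rw [Derivation.commutator_apply,
        pd_apply p hp (lieD (p α) β - lieD (p β) α + dR (α (p β))) h,
        pd_apply p hp β h, pd_apply p hp α h, map_neg, map_neg]
      simp only [LinearMap.add_apply, LinearMap.sub_apply, lieD_apply, dR_apply]
      linear_combination -hF
    have hsnd : (fun Z : Vec R => p α (β Z) - β ⁅p α, Z⁆ -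
          (p β (α Z) - Z (α (p β)) - α ⁅p β, Z⁆)) =
        fun Z => (lieD (p α) β - lieD (p β) α + dR (α (p β))) Z := by
      funext Z
      simp only [LinearMap.add_apply, LinearMap.sub_apply, lieD_apply, dR_apply]
      ring
    exact Prod.ext hfst hsnd
end
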